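/- Let Ψ : ℝᴷ → ℝ be differentiable with derivative DΨ Lipschitz continuous on bounded sets, and let φ : ℝⁿ → ℝᴷ be globally Lipschitz with constant K_a. Fix R ≥ 0 and consider measures in B̄_p(R) (probability measures on ℝⁿ with p-th moment at most R, p ≥ 1). Then for the map H(m) = Ψ(∫φ dm) with derivative representative DH(m,x) = DΨ(∫φ dm)·φ(x), there exist constants K₁, K₂ such that for all m₁, m₂, m₃, m₄ ∈ B̄_p(R): |∫ DH(m₁,x) d(m₄ - m₃)(x)| ≤ K₂ d₁(m₃, m₄) and |∫ (DH(m₂,x) - DH(m₁,x)) d(m₄ - m₃)(x)| ≤ K₁ d₁(m₁, m₂) d₁(m₃, m₄). -/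

import Mathlib

open MeasureTheory
open scoped ENNReal NNReal

/-- The Wasserstein-1 distance between two measures on `ℝⁿ`, defined as the infimum over
couplings of the integral of the distance. -/
noncomputable def W1 {n : ℕ} (μ ν : Measure (EuclideanSpace ℝ (Fin n))) : ℝ :=
  ⨅ π : {π : Measure (EuclideanSpace ℝ (Fin n) × EuclideanSpace ℝ (Fin n)) //
      π.map Prod.fst = μ ∧ π.map Prod.snd = ν},
    ∫ p, dist p.1 p.2 ∂(π : Measure (EuclideanSpace ℝ (Fin n) × EuclideanSpace ℝ (Fin n)))


section Aux

variable {n : ℕ}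

local notation "E" => EuclideanSpace ℝ (Fin n)

/-- From a `p`-th moment bound (`p ≥ 1`) we get integrability of the norm and a
first-moment bound. -/
lemma moment_int (p R : ℝ) (hp : 1 ≤ p) (hR : 0 ≤ R) (μ : Measure E)
    [IsProbabilityMeasure μ]
    (hμ : ∫⁻ x, (‖x‖₊ : ℝ≥0∞) ^ p ∂μ ≤ ENNReal.ofReal R) :
    Integrable (fun x : E => ‖x‖) μ ∧ ∫ x : E, ‖x‖ ∂μ ≤ 1 + R := by
  have key : ∫⁻ x : E, (‖x‖₊ : ℝ≥0∞) ∂μ ≤ 1 + ENNReal.ofReal R := by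
    have h1 : ∫⁻ x : E, (‖x‖₊ : ℝ≥0∞) ∂μ ≤ ∫⁻ x : E, 1 + (‖x‖₊ : ℝ≥0∞) ^ p ∂μ := by
      refine lintegral_mono fun x => ?_
      rcases le_or_gt (‖x‖₊ : ℝ≥0∞) 1 with h | h
      · exact h.trans le_self_add
      · have h1x : (1 : ℝ≥0∞) ≤ (‖x‖₊ : ℝ≥0∞) := h.le
        have : (‖x‖₊ : ℝ≥0∞) = (‖x‖₊ : ℝ≥0∞) ^ (1 : ℝ) := (ENNReal.rpow_one _).symm
        calc (‖x‖₊ : ℝ≥0∞) = (‖x‖₊ : ℝ≥0∞) ^ (1 : ℝ) := (ENNReal.rpow_one _).symm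
          _ ≤ (‖x‖₊ : ℝ≥0∞) ^ p := ENNReal.rpow_le_rpow_of_exponent_le h1x hp
          _ ≤ 1 + (‖x‖₊ : ℝ≥0∞) ^ p := le_add_self
    have h2 : ∫⁻ x : E, (1 : ℝ≥0∞) + (‖x‖₊ : ℝ≥0∞) ^ p ∂μ
        = 1 + ∫⁻ x : E, (‖x‖₊ : ℝ≥0∞) ^ p ∂μ := by
      rw [lintegral_add_left measurable_const, lintegral_const, measure_univ, mul_one]
    exact h1.trans (h2.le.trans (by gcongr))
  have hfin : ∫⁻ x : E, (‖x‖₊ : ℝ≥0∞) ∂μ < ⊤ :=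
    key.trans_lt (by finiteness)
  have hint : Integrable (fun x : E => ‖x‖) μ := by
    refine ⟨(continuous_norm).aestronglyMeasurable, ?_⟩
    simpa [HasFiniteIntegral, enorm_eq_nnnorm] using hfin
  refine ⟨hint, ?_⟩
  have heq : ∫ x : E, ‖x‖ ∂μ = (∫⁻ x : E, (‖x‖₊ : ℝ≥0∞) ∂μ).toReal := by
    rw [integral_eq_lintegral_of_nonneg_ae (Filter.Eventually.of_forall fun x => norm_nonneg x)
      continuous_norm.aestronglyMeasurable]
    congr 1
    refine lintegral_congr fun x => ?_
    rw [ENNReal.ofReal_eq_coe_nnreal (norm_nonneg x)]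
    rfl
  rw [heq]
  have : (∫⁻ x : E, (‖x‖₊ : ℝ≥0∞) ∂μ).toReal ≤ (1 + ENNReal.ofReal R).toReal :=
    ENNReal.toReal_mono (by finiteness) key
  refine this.trans ?_
  rw [ENNReal.toReal_add (by norm_num) ENNReal.ofReal_ne_top, ENNReal.toReal_one,
    ENNReal.toReal_ofReal hR]

lemma W1_nonneg (μ ν : Measure E) : 0 ≤ W1 μ ν :=
  Real.iInf_nonneg fun π => integral_nonneg fun p => dist_nonneg

/-- Kantorovich easy direction: Lipschitz-type bound by `W1`. -/
lemma lip_W1 {F : Type*} [NormedAddCommGroup F] [NormedSpace ℝ F] [CompleteSpace F]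
    (μ ν : Measure E) [IsProbabilityMeasure μ] [IsProbabilityMeasure ν]
    (hμ : Integrable (fun x : E => ‖x‖) μ) (hν : Integrable (fun x : E => ‖x‖) ν)
    (f : E → F) (L : ℝ) (hL : 0 ≤ L)
    (hf : ∀ x y, ‖f x - f y‖ ≤ L * dist x y) :
    ‖(∫ x, f x ∂ν) - ∫ x, f x ∂μ‖ ≤ L * W1 μ ν := by
  have hflip : LipschitzWith L.toNNReal f := by
    refine LipschitzWith.of_dist_le_mul fun x y => ?_
    rw [dist_eq_norm, Real.coe_toNNReal _ hL]
    exact hf x y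
  have hfc : Continuous f := hflip.continuous
  -- integrability of f w.r.t. a probability measure with finite first moment
  have hfint : ∀ (κ : Measure E), IsProbabilityMeasure κ →
      Integrable (fun x : E => ‖x‖) κ → Integrable f κ := by
    intro κ hκ hκ1
    refine Integrable.mono' ((hκ1.const_mul L).add (integrable_const ‖f 0‖))
      hfc.aestronglyMeasurable (Filter.Eventually.of_forall fun x => ?_)
    show ‖f x‖ ≤ L * ‖x‖ + ‖f 0‖
    have h1 := norm_sub_norm_le (f x) (f 0)
    have h2 : ‖f x - f 0‖ ≤ L * ‖x‖ := by simpa [dist_eq_norm] using hf x 0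
    linarith
  -- the key estimate for an arbitrary coupling
  have hcoupling : ∀ π : Measure (E × E), π.map Prod.fst = μ → π.map Prod.snd = ν →
      ‖(∫ x, f x ∂ν) - ∫ x, f x ∂μ‖ ≤ L * ∫ p : E × E, dist p.1 p.2 ∂π := by
    intro π hπ1 hπ2
    haveI : IsProbabilityMeasure π := by
      constructor
      have : (π.map Prod.fst) Set.univ = π Set.univ := by
        rw [Measure.map_apply measurable_fst MeasurableSet.univ]; rfl
      rw [← this, hπ1, measure_univ]
    have hμeq : ∫ x, f x ∂μ = ∫ p : E × E, f p.1 ∂π := by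
      rw [← hπ1, integral_map measurable_fst.aemeasurable
        (hfc.aestronglyMeasurable)]
    have hνeq : ∫ x, f x ∂ν = ∫ p : E × E, f p.2 ∂π := by
      rw [← hπ2, integral_map measurable_snd.aemeasurable
        (hfc.aestronglyMeasurable)]
    have hint1 : Integrable (fun p : E × E => f p.1) π := by
      have := (integrable_map_measure hfc.aestronglyMeasurable
        measurable_fst.aemeasurable (μ := π) (f := Prod.fst) (g := f)).mp
      rw [hπ1] at this
      exact this (hfint μ ‹_› hμ)
    have hint2 : Integrable (fun p : E × E => f p.2) π := by
      have := (integrable_map_measure hfc.aestronglyMeasurable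
        measurable_snd.aemeasurable (μ := π) (f := Prod.snd) (g := f)).mp
      rw [hπ2] at this
      exact this (hfint ν ‹_› hν)
    have hnorm1 : Integrable (fun p : E × E => ‖p.1‖) π := by
      have := (integrable_map_measure continuous_norm.aestronglyMeasurable
        measurable_fst.aemeasurable (μ := π) (f := Prod.fst)
        (g := fun x : E => ‖x‖)).mp
      rw [hπ1] at this
      exact this hμ
    have hnorm2 : Integrable (fun p : E × E => ‖p.2‖) π := by
      have := (integrable_map_measure continuous_norm.aestronglyMeasurable
        measurable_snd.aemeasurable (μ := π) (f := Prod.snd)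
        (g := fun x : E => ‖x‖)).mp
      rw [hπ2] at this
      exact this hν
    have hdist : Integrable (fun p : E × E => dist p.1 p.2) π := by
      refine Integrable.mono' (hnorm1.add hnorm2)
        (continuous_dist.comp (continuous_fst.prodMk continuous_snd)).aestronglyMeasurable
        (Filter.Eventually.of_forall fun p => ?_)
      rw [Real.norm_eq_abs, abs_of_nonneg dist_nonneg]
      calc dist p.1 p.2 ≤ dist p.1 0 + dist 0 p.2 := dist_triangle _ _ _
        _ = ‖p.1‖ + ‖p.2‖ := by rw [dist_zero_right, dist_zero_left]
    rw [hμeq, hνeq, ← integral_sub hint2 hint1]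
    calc ‖∫ p : E × E, (f p.2 - f p.1) ∂π‖ ≤ ∫ p : E × E, ‖f p.2 - f p.1‖ ∂π :=
        norm_integral_le_integral_norm _
      _ ≤ ∫ p : E × E, L * dist p.1 p.2 ∂π := by
          refine integral_mono (hint2.sub hint1).norm (hdist.const_mul L) fun p => ?_
          simpa [dist_comm] using hf p.2 p.1
      _ = L * ∫ p : E × E, dist p.1 p.2 ∂π := integral_const_mul _ _
  -- nonempty coupling type
  haveI hne : Nonempty {π : Measure (E × E) // π.map Prod.fst = μ ∧ π.map Prod.snd = ν} := by
    refine ⟨⟨μ.prod ν, ?_, ?_⟩⟩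
    · rw [Measure.map_fst_prod, measure_univ, one_smul]
    · rw [Measure.map_snd_prod, measure_univ, one_smul]
  rcases eq_or_lt_of_le hL with hL0 | hL0
  · obtain ⟨π⟩ := hne
    have := hcoupling π.1 π.2.1 π.2.2
    rw [← hL0] at this ⊢
    simpa using this
  · rw [W1, ← div_le_iff₀' hL0]
    refine le_ciInf fun π => ?_
    rw [div_le_iff₀' hL0]
    exact hcoupling π.1 π.2.1 π.2.2

end Aux

/-- For `H(m) = Ψ(∫φ dm)` with `Ψ` differentiable with locally Lipschitz derivative and
`φ` globally Lipschitz, the derivative representative `DH(m,x) = DΨ(∫φ dm)(φ(x))`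
satisfies the boundedness and Lipschitz estimates of Assumption 5 on `B̄_p(R)`. -/
theorem stmt16 {n K : ℕ} (p R : ℝ) (hp : 1 ≤ p) (hR : 0 ≤ R)
    (Ψ : (Fin K → ℝ) → ℝ) (hΨ : Differentiable ℝ Ψ)
    (hΨ' : ∀ s : Set (Fin K → ℝ), Bornology.IsBounded s →
      ∃ C : ℝ, ∀ x ∈ s, ∀ y ∈ s, ‖fderiv ℝ Ψ x - fderiv ℝ Ψ y‖ ≤ C * ‖x - y‖)
    (Ka : ℝ≥0) (φ : EuclideanSpace ℝ (Fin n) → (Fin K → ℝ))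
    (hφ : LipschitzWith Ka φ) :
    ∃ K₁ K₂ : ℝ, ∀ m₁ m₂ m₃ m₄ : Measure (EuclideanSpace ℝ (Fin n)),
      IsProbabilityMeasure m₁ → IsProbabilityMeasure m₂ →
      IsProbabilityMeasure m₃ → IsProbabilityMeasure m₄ →
      (∫⁻ x, (‖x‖₊ : ℝ≥0∞) ^ p ∂m₁ ≤ ENNReal.ofReal R) →
      (∫⁻ x, (‖x‖₊ : ℝ≥0∞) ^ p ∂m₂ ≤ ENNReal.ofReal R) →
      (∫⁻ x, (‖x‖₊ : ℝ≥0∞) ^ p ∂m₃ ≤ ENNReal.ofReal R) →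
      (∫⁻ x, (‖x‖₊ : ℝ≥0∞) ^ p ∂m₄ ≤ ENNReal.ofReal R) →
      (|(∫ x, fderiv ℝ Ψ (∫ y, φ y ∂m₁) (φ x) ∂m₄) -
          (∫ x, fderiv ℝ Ψ (∫ y, φ y ∂m₁) (φ x) ∂m₃)| ≤ K₂ * W1 m₃ m₄) ∧
      (|(∫ x, (fderiv ℝ Ψ (∫ y, φ y ∂m₂) (φ x) - fderiv ℝ Ψ (∫ y, φ y ∂m₁) (φ x)) ∂m₄) -
          (∫ x, (fderiv ℝ Ψ (∫ y, φ y ∂m₂) (φ x) - fderiv ℝ Ψ (∫ y, φ y ∂m₁) (φ x)) ∂m₃)|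
        ≤ K₁ * W1 m₁ m₂ * W1 m₃ m₄) := by
  classical
  set B : ℝ := ‖φ 0‖ + Ka * (1 + R) with hBdef
  have hB0 : 0 ≤ B := by positivity
  obtain ⟨C, hC⟩ := hΨ' (Metric.closedBall 0 B) Metric.isBounded_closedBall
  set C' : ℝ := max C 0 with hC'def
  have hC'0 : 0 ≤ C' := le_max_right _ _
  have hCC' : C ≤ C' := le_max_left _ _
  set M : ℝ := ‖fderiv ℝ Ψ 0‖ + C' * B with hMdef
  have hM0 : 0 ≤ M := by positivity
  refine ⟨C' * Ka * Ka, M * Ka, ?_⟩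
  intro m₁ m₂ m₃ m₄ h1 h2 h3 h4 hm1 hm2 hm3 hm4
  haveI := h1; haveI := h2; haveI := h3; haveI := h4
  obtain ⟨hi1, hn1⟩ := moment_int p R hp hR m₁ hm1
  obtain ⟨hi2, hn2⟩ := moment_int p R hp hR m₂ hm2
  obtain ⟨hi3, hn3⟩ := moment_int p R hp hR m₃ hm3
  obtain ⟨hi4, hn4⟩ := moment_int p R hp hR m₄ hm4
  have hφlip : ∀ x y : EuclideanSpace ℝ (Fin n), ‖φ x - φ y‖ ≤ (Ka : ℝ) * dist x y := by
    intro x y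
    have := hφ.dist_le_mul x y
    rwa [dist_eq_norm] at this
  -- each ∫ φ lies in the closed ball of radius B
  have hφint : ∀ κ : Measure (EuclideanSpace ℝ (Fin n)), IsProbabilityMeasure κ →
      Integrable (fun x => ‖x‖) κ → Integrable φ κ := by
    intro κ hκ hκn
    refine Integrable.mono' ((hκn.const_mul (Ka : ℝ)).add (integrable_const ‖φ 0‖))
      hφ.continuous.aestronglyMeasurable (Filter.Eventually.of_forall fun x => ?_)
    show ‖φ x‖ ≤ (Ka : ℝ) * ‖x‖ + ‖φ 0‖
    have h1' := norm_sub_norm_le (φ x) (φ 0)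
    have h2' : ‖φ x - φ 0‖ ≤ (Ka : ℝ) * ‖x‖ := by simpa using hφlip x 0
    linarith
  have hball : ∀ κ : Measure (EuclideanSpace ℝ (Fin n)), IsProbabilityMeasure κ →
      Integrable (fun x => ‖x‖) κ → (∫ x, ‖x‖ ∂κ ≤ 1 + R) →
      (∫ y, φ y ∂κ) ∈ Metric.closedBall (0 : Fin K → ℝ) B := by
    intro κ hκ hκn hκR
    rw [Metric.mem_closedBall, dist_zero_right]
    have hint : Integrable (fun y => (Ka : ℝ) * ‖y‖ + ‖φ 0‖) κ :=
      (hκn.const_mul (Ka : ℝ)).add (integrable_const _)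
    calc ‖∫ y, φ y ∂κ‖ ≤ ∫ y, ‖φ y‖ ∂κ := norm_integral_le_integral_norm _
      _ ≤ ∫ y, ((Ka : ℝ) * ‖y‖ + ‖φ 0‖) ∂κ := by
          refine integral_mono (hφint κ hκ hκn).norm hint fun y => ?_
          have h1' := norm_sub_norm_le (φ y) (φ 0)
          have h2' : ‖φ y - φ 0‖ ≤ (Ka : ℝ) * ‖y‖ := by simpa using hφlip y 0
          show ‖φ y‖ ≤ (Ka : ℝ) * ‖y‖ + ‖φ 0‖
          linarith
      _ = (Ka : ℝ) * (∫ y, ‖y‖ ∂κ) + ‖φ 0‖ := by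
          rw [integral_add (hκn.const_mul _) (integrable_const _), integral_const,
            integral_const_mul]
          simp
      _ ≤ (Ka : ℝ) * (1 + R) + ‖φ 0‖ := by
          have : (Ka : ℝ) * (∫ y, ‖y‖ ∂κ) ≤ (Ka : ℝ) * (1 + R) :=
            mul_le_mul_of_nonneg_left hκR Ka.coe_nonneg
          linarith
      _ = B := by rw [hBdef]; ring
  have hb1 := hball m₁ h1 hi1 hn1
  have hb2 := hball m₂ h2 hi2 hn2
  have h0mem : (0 : Fin K → ℝ) ∈ Metric.closedBall (0 : Fin K → ℝ) B :=
    Metric.mem_closedBall_self hB0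
  have hDbound : ∀ z ∈ Metric.closedBall (0 : Fin K → ℝ) B, ‖fderiv ℝ Ψ z‖ ≤ M := by
    intro z hz
    have hz' : ‖z‖ ≤ B := by rwa [Metric.mem_closedBall, dist_zero_right] at hz
    have h1' := norm_sub_norm_le (fderiv ℝ Ψ z) (fderiv ℝ Ψ 0)
    have h2' : ‖fderiv ℝ Ψ z - fderiv ℝ Ψ 0‖ ≤ C' * B := by
      have := hC z hz 0 h0mem
      calc ‖fderiv ℝ Ψ z - fderiv ℝ Ψ 0‖ ≤ C * ‖z - 0‖ := this
        _ ≤ C' * ‖z - 0‖ := mul_le_mul_of_nonneg_right hCC' (norm_nonneg _)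
        _ ≤ C' * B := mul_le_mul_of_nonneg_left (by simpa using hz') hC'0
    rw [hMdef]; linarith
  set z₁ : Fin K → ℝ := ∫ y, φ y ∂m₁ with hz₁
  set z₂ : Fin K → ℝ := ∫ y, φ y ∂m₂ with hz₂
  constructor
  · -- first estimate
    have key := lip_W1 m₃ m₄ hi3 hi4 (fun x => fderiv ℝ Ψ z₁ (φ x)) (M * Ka)
      (by positivity) ?_
    · simpa [Real.norm_eq_abs] using key
    · intro x y
      have : fderiv ℝ Ψ z₁ (φ x) - fderiv ℝ Ψ z₁ (φ y) = fderiv ℝ Ψ z₁ (φ x - φ y) := by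
        rw [map_sub]
      rw [this]
      calc ‖fderiv ℝ Ψ z₁ (φ x - φ y)‖ ≤ ‖fderiv ℝ Ψ z₁‖ * ‖φ x - φ y‖ :=
          (fderiv ℝ Ψ z₁).le_opNorm _
        _ ≤ M * ((Ka : ℝ) * dist x y) := by
            refine mul_le_mul (hDbound z₁ hb1) (hφlip x y) (norm_nonneg _) hM0
        _ = M * Ka * dist x y := by ring
  · -- second estimate
    have hzdist : ‖z₂ - z₁‖ ≤ (Ka : ℝ) * W1 m₁ m₂ :=
      lip_W1 m₁ m₂ hi1 hi2 φ (Ka : ℝ) Ka.coe_nonneg hφlip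
    have hDdiff : ‖fderiv ℝ Ψ z₂ - fderiv ℝ Ψ z₁‖ ≤ C' * ‖z₂ - z₁‖ := by
      calc ‖fderiv ℝ Ψ z₂ - fderiv ℝ Ψ z₁‖ ≤ C * ‖z₂ - z₁‖ := hC z₂ hb2 z₁ hb1
        _ ≤ C' * ‖z₂ - z₁‖ := mul_le_mul_of_nonneg_right hCC' (norm_nonneg _)
    have key := lip_W1 m₃ m₄ hi3 hi4
      (fun x => fderiv ℝ Ψ z₂ (φ x) - fderiv ℝ Ψ z₁ (φ x))
      (C' * ‖z₂ - z₁‖ * Ka) (by positivity) ?_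
    · have hW34 := W1_nonneg m₃ m₄
      have step : C' * ‖z₂ - z₁‖ * (Ka : ℝ) ≤ C' * ((Ka : ℝ) * W1 m₁ m₂) * Ka := by
        have := mul_le_mul_of_nonneg_left hzdist hC'0
        exact mul_le_mul_of_nonneg_right this Ka.coe_nonneg
      have final : C' * ‖z₂ - z₁‖ * (Ka : ℝ) * W1 m₃ m₄
          ≤ C' * Ka * Ka * W1 m₁ m₂ * W1 m₃ m₄ := by
        have := mul_le_mul_of_nonneg_right step hW34
        calc C' * ‖z₂ - z₁‖ * (Ka : ℝ) * W1 m₃ m₄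
            ≤ C' * ((Ka : ℝ) * W1 m₁ m₂) * Ka * W1 m₃ m₄ := this
          _ = C' * Ka * Ka * W1 m₁ m₂ * W1 m₃ m₄ := by ring
      have := key.trans final
      simpa [Real.norm_eq_abs] using this
    · intro x y
      have heq : (fderiv ℝ Ψ z₂ (φ x) - fderiv ℝ Ψ z₁ (φ x)) -
          (fderiv ℝ Ψ z₂ (φ y) - fderiv ℝ Ψ z₁ (φ y)) =
          (fderiv ℝ Ψ z₂ - fderiv ℝ Ψ z₁) (φ x - φ y) := by
        simp only [map_sub, ContinuousLinearMap.sub_apply]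
      rw [heq]
      calc ‖(fderiv ℝ Ψ z₂ - fderiv ℝ Ψ z₁) (φ x - φ y)‖
          ≤ ‖fderiv ℝ Ψ z₂ - fderiv ℝ Ψ z₁‖ * ‖φ x - φ y‖ :=
            (fderiv ℝ Ψ z₂ - fderiv ℝ Ψ z₁).le_opNorm _
        _ ≤ (C' * ‖z₂ - z₁‖) * ((Ka : ℝ) * dist x y) :=
            mul_le_mul hDdiff (hφlip x y) (norm_nonneg _) (by positivity)
        _ = C' * ‖z₂ - z₁‖ * Ka * dist x y := by ring
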